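/- arXiv:2011.11547 — 2 statements merged into one kernel-verified Lean document; each statement's English description precedes it below -/
import Mathlib

section
/- Let X be a metric space and λ ≥ 1/2. Suppose that for some M > 0 and r > 0, every ball of radius λr in X can be covered by M balls of radius r/2. Let {B_α = B(x_α, r)}_{α∈A} be a collection of balls such that the balls {B(x_α, r/2)}_{α∈A} are pairwise disjoint. Then every point x ∈ X belongs to at most M of the dilated balls λB_α = B(x_α, λr). -/
open Metric Set

/-- If every ball of radius `λr` can be covered by `M` balls of radius `r/2`, and the balls
`B(x_α, r/2)` are pairwise disjoint, then every point belongs to at most `M` of the dilated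
balls `B(x_α, λr)`. -/
theorem stmt0 {X : Type*} [MetricSpace X] (lam : ℝ) (hlam : 1 / 2 ≤ lam)
    (M : ℕ) (hM : 0 < M) (r : ℝ) (hr : 0 < r)
    (hcov : ∀ y : X, ∃ F : Finset X, F.card ≤ M ∧
      ball y (lam * r) ⊆ ⋃ c ∈ F, ball c (r / 2))
    {A : Type*} (x : A → X)
    (hdisj : Pairwise fun α β => Disjoint (ball (x α) (r / 2)) (ball (x β) (r / 2)))
    (z : X) :
    {α : A | z ∈ ball (x α) (lam * r)}.Finite ∧
      {α : A | z ∈ ball (x α) (lam * r)}.ncard ≤ M := by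
  classical
  set S := {α : A | z ∈ ball (x α) (lam * r)} with hS
  obtain ⟨F, hFcard, hFcov⟩ := hcov z
  have hex : ∀ α : A, ∃ c : X, α ∈ S → c ∈ F ∧ x α ∈ ball c (r / 2) := by
    intro α
    by_cases hα : α ∈ S
    · have hxα : x α ∈ ball z (lam * r) := by
        simpa [hS, mem_ball, dist_comm] using hα
      have := hFcov hxα
      simp only [mem_iUnion, exists_prop] at this
      obtain ⟨c, hc, hc2⟩ := this
      exact ⟨c, fun _ => ⟨hc, hc2⟩⟩
    · exact ⟨z, fun h => absurd h hα⟩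
  choose f hf using hex
  have hmaps : ∀ α ∈ S, f α ∈ (F : Set X) := fun α hα => (hf α hα).1
  have hinj : Set.InjOn f S := by
    intro α hα β hβ hfab
    by_contra hne
    have h1 : f α ∈ ball (x α) (r / 2) := by
      simpa [mem_ball, dist_comm] using (hf α hα).2
    have h2 : f α ∈ ball (x β) (r / 2) := by
      rw [hfab]
      simpa [mem_ball, dist_comm] using (hf β hβ).2
    exact (hdisj hne).le_bot ⟨h1, h2⟩ |>.elim
  have hfin : S.Finite := Set.Finite.of_finite_image
    (F.finite_toSet.subset (Set.image_subset_iff.mpr hmaps)) hinj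
  refine ⟨hfin, ?_⟩
  calc S.ncard ≤ (F : Set X).ncard :=
        Set.ncard_le_ncard_of_injOn f hmaps hinj F.finite_toSet
    _ = F.card := Set.ncard_coe_finset F
    _ ≤ M := hFcard
end

section
/- Let v(x) = 1/w(x) where w(x) = |x| log(1/|x|) for 0 < |x| < 1/2 and w(x) = (1/2) log 2 otherwise, on ℝ². Let dν = v dx. Then there exist constants c, C > 0 such that for all sufficiently small r > 0, c · r / log(1/r) ≤ ν(B(0,r)) ≤ C · r / log(1/r). Consequently, for every q > 2, the quantity r · ν(B(0,r))^{1/q} / μ(B(0,r))^{1/2} (with dμ = w dx) tends to infinity as r → 0. -/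
open Metric MeasureTheory Filter
open scoped ENNReal Topology

/-- The weight `w(x) = |x| log(1/|x|)` for `0 < |x| < 1/2`, and `(1/2) log 2` otherwise. -/
noncomputable def wWeight (x : EuclideanSpace ℝ (Fin 2)) : ℝ :=
  if 0 < ‖x‖ ∧ ‖x‖ < 1 / 2 then ‖x‖ * Real.log (1 / ‖x‖) else (1 / 2) * Real.log 2

open Set

local notation "E2" => EuclideanSpace ℝ (Fin 2)

noncomputable def wf (y : ℝ) : ℝ :=
  if 0 < y ∧ y < 1 / 2 then y * Real.log (1 / y) else (1 / 2) * Real.log 2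

lemma measurable_wf : Measurable wf := by
  unfold wf
  have hms : MeasurableSet {y : ℝ | 0 < y ∧ y < 1 / 2} :=
    (measurableSet_Ioo : MeasurableSet (Ioo (0:ℝ) (1/2)))
  exact Measurable.ite hms
    (measurable_id.mul (Real.measurable_log.comp (measurable_const.div measurable_id)))
    measurable_const

lemma wf_of_mem {y : ℝ} (h1 : 0 < y) (h2 : y < 1 / 2) : wf y = y * Real.log (1 / y) :=
  if_pos ⟨h1, h2⟩

noncomputable def Stot : ℝ≥0∞ := (volume : Measure E2).toSphere Set.univ

lemma Stot_ne_top : Stot ≠ ⊤ := measure_ne_top _ _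

lemma Stot_ne_zero : Stot ≠ 0 := by
  rw [Stot, Measure.toSphere_apply_univ]
  refine mul_ne_zero ?_ (measure_ball_pos _ _ one_pos).ne'
  simp [finrank_euclideanSpace_fin]

lemma Stot_toReal_pos : 0 < Stot.toReal :=
  ENNReal.toReal_pos Stot_ne_zero Stot_ne_top

lemma Stot_eq : Stot = ENNReal.ofReal Stot.toReal := (ENNReal.ofReal_toReal Stot_ne_top).symm



lemma lintegral_fun_norm_E2 (g : ℝ → ℝ≥0∞) (hg : Measurable g) :
    ∫⁻ x : E2, g ‖x‖ = (volume : Measure E2).toSphere Set.univ *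
      ∫⁻ y in Ioi (0 : ℝ), ENNReal.ofReal y * g y := by
  have hdim : Module.finrank ℝ E2 = 2 := finrank_euclideanSpace_fin
  have hmeas : Measurable fun p : sphere (0 : E2) 1 × Ioi (0 : ℝ) => g p.2 :=
    hg.comp (measurable_subtype_coe.comp measurable_snd)
  calc
    ∫⁻ x : E2, g ‖x‖ = ∫⁻ x in ({0}ᶜ : Set E2), g ‖x‖ := by
      rw [restrict_compl_singleton]
    _ = ∫⁻ z : ({0}ᶜ : Set E2), g ‖(z : E2)‖ ∂((volume : Measure E2).comap (↑)) :=
      (lintegral_subtype_comap (measurableSet_singleton _).compl (fun x => g ‖x‖)).symm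
    _ = ∫⁻ p : sphere (0 : E2) 1 × Ioi (0 : ℝ), g p.2
        ∂((volume : Measure E2).toSphere.prod (.volumeIoiPow (Module.finrank ℝ E2 - 1))) :=
      by rw [← (volume : Measure E2).measurePreserving_homeomorphUnitSphereProd.lintegral_comp
        (f := fun p => g p.2) hmeas]; simp only [homeomorphUnitSphereProd_apply_snd_coe]
    _ = (volume : Measure E2).toSphere Set.univ *
        ∫⁻ y : Ioi (0:ℝ), g y ∂(Measure.volumeIoiPow (Module.finrank ℝ E2 - 1)) := by
      rw [MeasureTheory.lintegral_prod _ hmeas.aemeasurable]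
      simp [lintegral_const, mul_comm]
    _ = (volume : Measure E2).toSphere Set.univ * ∫⁻ y in Ioi (0 : ℝ), ENNReal.ofReal y * g y := by
      congr 1
      rw [hdim]
      rw [Measure.volumeIoiPow, lintegral_withDensity_eq_lintegral_mul _
        (by exact (measurable_subtype_coe.pow_const _).ennreal_ofReal)
        (show Measurable fun y : Ioi (0:ℝ) => g y.1 from hg.comp measurable_subtype_coe)]
      rw [show (fun y : Ioi (0:ℝ) => (((fun r : Ioi (0:ℝ) => ENNReal.ofReal (r.1 ^ (2-1))) * fun y : Ioi (0:ℝ) => g y.1)) y)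
          = fun y : Ioi (0:ℝ) => (fun z : ℝ => ENNReal.ofReal z * g z) y.1 by
        funext y; simp [pow_one]]
      rw [lintegral_subtype_comap measurableSet_Ioi (fun z : ℝ => ENNReal.ofReal z * g z)]

lemma withDensity_ball_E2 (h : ℝ → ℝ≥0∞) (hh : Measurable h) (r : ℝ) :
    (volume.withDensity fun x : E2 => h ‖x‖) (ball (0 : E2) r)
      = (volume : Measure E2).toSphere Set.univ *
        ∫⁻ y in Ioo (0 : ℝ) r, ENNReal.ofReal y * h y := by
  rw [withDensity_apply _ measurableSet_ball, ← lintegral_indicator measurableSet_ball (fun x : E2 => h ‖x‖)]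
  have : (Set.indicator (ball (0:E2) r) fun x => h ‖x‖) = fun x : E2 => (Set.indicator (Iio r) h) ‖x‖ := by
    funext x
    by_cases hx : ‖x‖ < r
    · rw [Set.indicator_of_mem (mem_ball_zero_iff.2 hx), Set.indicator_of_mem (mem_Iio.2 hx)]
    · rw [Set.indicator_of_notMem (fun hc => hx (mem_ball_zero_iff.1 hc)),
        Set.indicator_of_notMem (fun hc => hx (mem_Iio.1 hc))]
  rw [this, lintegral_fun_norm_E2 _ (hh.indicator measurableSet_Iio)]
  congr 1
  have : (fun y : ℝ => ENNReal.ofReal y * (Iio r).indicator h y)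
      = (Iio r).indicator (fun y => ENNReal.ofReal y * h y) := by
    funext y
    by_cases hy : y ∈ Iio r
    · rw [Set.indicator_of_mem hy, Set.indicator_of_mem hy]
    · rw [Set.indicator_of_notMem hy, Set.indicator_of_notMem hy, mul_zero]
  rw [this, lintegral_indicator measurableSet_Iio _, Measure.restrict_restrict measurableSet_Iio,
    show Iio r ∩ Ioi 0 = Ioo 0 r by rw [inter_comm, Ioi_inter_Iio]]

lemma nu_eq (r : ℝ) (hr : 0 < r) (hr2 : r < 1 / 2) :
    (volume.withDensity fun x => ENNReal.ofReal (wWeight x)⁻¹) (ball (0 : E2) r)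
      = Stot * ∫⁻ y in Ioo (0 : ℝ) r, ENNReal.ofReal (Real.log (1 / y))⁻¹ := by
  have h1 : (volume.withDensity fun x => ENNReal.ofReal (wWeight x)⁻¹)
      = volume.withDensity fun x : E2 => (fun y => ENNReal.ofReal (wf y)⁻¹) ‖x‖ := rfl
  rw [h1, withDensity_ball_E2 (fun y => ENNReal.ofReal (wf y)⁻¹) (measurable_wf.inv.ennreal_ofReal) r]
  rw [Stot]
  congr 1
  refine setLIntegral_congr_fun measurableSet_Ioo (fun y hy => ?_)
  have hy1 : 0 < y := hy.1
  have hy2 : y < 1 / 2 := lt_trans hy.2 hr2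
  rw [wf_of_mem hy1 hy2, ← ENNReal.ofReal_mul hy1.le]
  congr 1
  rw [mul_inv]
  rw [← mul_assoc, mul_inv_cancel₀ hy1.ne', one_mul]

lemma mu_eq (r : ℝ) (hr : 0 < r) (hr2 : r < 1 / 2) :
    (volume.withDensity fun x => ENNReal.ofReal (wWeight x)) (ball (0 : E2) r)
      = Stot * ∫⁻ y in Ioo (0 : ℝ) r, ENNReal.ofReal (y ^ 2 * Real.log (1 / y)) := by
  have h1 : (volume.withDensity fun x => ENNReal.ofReal (wWeight x))
      = volume.withDensity fun x : E2 => (fun y => ENNReal.ofReal (wf y)) ‖x‖ := rfl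
  rw [h1, withDensity_ball_E2 _ (measurable_wf.ennreal_ofReal) r, Stot]
  congr 1
  refine setLIntegral_congr_fun measurableSet_Ioo (fun y hy => ?_)
  have hy1 : 0 < y := hy.1
  have hy2 : y < 1 / 2 := lt_trans hy.2 hr2
  rw [wf_of_mem hy1 hy2, ← ENNReal.ofReal_mul hy1.le]
  congr 1
  ring

lemma log_one_div_pos {r : ℝ} (hr : 0 < r) (hr1 : r < 1) : 0 < Real.log (1 / r) :=
  Real.log_pos ((one_lt_div hr).2 (by linarith))

lemma nu_upper (r : ℝ) (hr : 0 < r) (hr2 : r < 1 / 2) :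
    (volume.withDensity fun x => ENNReal.ofReal (wWeight x)⁻¹) (ball (0 : E2) r)
      ≤ ENNReal.ofReal (Stot.toReal * r / Real.log (1 / r)) := by
  have hL : 0 < Real.log (1 / r) := log_one_div_pos hr (by linarith)
  rw [nu_eq r hr hr2]
  have h1 : (∫⁻ y in Ioo (0 : ℝ) r, ENNReal.ofReal (Real.log (1 / y))⁻¹)
      ≤ ENNReal.ofReal ((Real.log (1 / r))⁻¹ * r) := by
    calc (∫⁻ y in Ioo (0 : ℝ) r, ENNReal.ofReal (Real.log (1 / y))⁻¹)
        ≤ ∫⁻ _ in Ioo (0 : ℝ) r, ENNReal.ofReal (Real.log (1 / r))⁻¹ := by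
          refine setLIntegral_mono measurable_const fun y hy => ?_
          refine ENNReal.ofReal_le_ofReal ?_
          have hy1 : 0 < y := hy.1
          have hLy : Real.log (1 / r) ≤ Real.log (1 / y) := by
            refine Real.log_le_log (by positivity) ?_
            exact one_div_le_one_div_of_le hy1 hy.2.le
          exact inv_anti₀ hL hLy
      _ = ENNReal.ofReal (Real.log (1 / r))⁻¹ * volume (Ioo (0:ℝ) r) := setLIntegral_const _ _
      _ = ENNReal.ofReal ((Real.log (1 / r))⁻¹ * r) := by
          rw [Real.volume_Ioo, sub_zero, ENNReal.ofReal_mul (by positivity)]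
  calc Stot * ∫⁻ y in Ioo (0 : ℝ) r, ENNReal.ofReal (Real.log (1 / y))⁻¹
      ≤ ENNReal.ofReal Stot.toReal * ENNReal.ofReal ((Real.log (1 / r))⁻¹ * r) := by
        rw [← Stot_eq]; exact mul_le_mul_right h1 _
    _ = ENNReal.ofReal (Stot.toReal * r / Real.log (1 / r)) := by
        rw [← ENNReal.ofReal_mul Stot_toReal_pos.le]
        congr 1
        field_simp

lemma nu_lower (r : ℝ) (hr : 0 < r) (hr2 : r < 1 / 2) :
    ENNReal.ofReal (Stot.toReal / 4 * r / Real.log (1 / r))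
      ≤ (volume.withDensity fun x => ENNReal.ofReal (wWeight x)⁻¹) (ball (0 : E2) r) := by
  have hL : 0 < Real.log (1 / r) := log_one_div_pos hr (by linarith)
  rw [nu_eq r hr hr2]
  have h1 : ENNReal.ofReal ((2 * Real.log (1 / r))⁻¹ * (r / 2))
      ≤ ∫⁻ y in Ioo (0 : ℝ) r, ENNReal.ofReal (Real.log (1 / y))⁻¹ := by
    calc ENNReal.ofReal ((2 * Real.log (1 / r))⁻¹ * (r / 2))
        = ENNReal.ofReal (2 * Real.log (1 / r))⁻¹ * volume (Ioo (r / 2) r) := by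
          rw [Real.volume_Ioo, ENNReal.ofReal_mul (by positivity)]
          congr 2
          ring
      _ = ∫⁻ _ in Ioo (r / 2) r, ENNReal.ofReal (2 * Real.log (1 / r))⁻¹ :=
          (setLIntegral_const _ _).symm
      _ ≤ ∫⁻ y in Ioo (r / 2) r, ENNReal.ofReal (Real.log (1 / y))⁻¹ := by
          refine setLIntegral_mono
            ((Real.measurable_log.comp (measurable_const.div measurable_id)).inv.ennreal_ofReal)
            fun y hy => ?_
          refine ENNReal.ofReal_le_ofReal ?_
          have hy1 : 0 < y := lt_trans (by positivity) hy.1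
          have hLy : 0 < Real.log (1 / y) := log_one_div_pos hy1 (by linarith [hy.2])
          refine inv_anti₀ hLy ?_
          have h1y : 1 / y ≤ 2 / r := by
            rw [div_le_div_iff₀ hy1 hr]
            nlinarith [hy.1]
          calc Real.log (1 / y) ≤ Real.log (2 / r) := Real.log_le_log (by positivity) h1y
            _ = Real.log 2 + Real.log (1 / r) := by
                rw [show (2:ℝ) / r = 2 * (1 / r) by ring,
                  Real.log_mul two_ne_zero (by positivity)]
            _ ≤ 2 * Real.log (1 / r) := by
                have : Real.log 2 ≤ Real.log (1 / r) := by
                  refine Real.log_le_log two_pos ?_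
                  rw [le_div_iff₀ hr]; linarith
                linarith
      _ ≤ ∫⁻ y in Ioo (0 : ℝ) r, ENNReal.ofReal (Real.log (1 / y))⁻¹ :=
          lintegral_mono_set (Ioo_subset_Ioo (by positivity) le_rfl)
  calc ENNReal.ofReal (Stot.toReal / 4 * r / Real.log (1 / r))
      = ENNReal.ofReal Stot.toReal * ENNReal.ofReal ((2 * Real.log (1 / r))⁻¹ * (r / 2)) := by
        rw [← ENNReal.ofReal_mul Stot_toReal_pos.le]
        congr 1
        rw [mul_inv, div_eq_mul_inv, div_eq_mul_inv]
        ring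
    _ ≤ Stot * ∫⁻ y in Ioo (0 : ℝ) r, ENNReal.ofReal (Real.log (1 / y))⁻¹ := by
        rw [← Stot_eq]; exact mul_le_mul_right h1 _

lemma mu_lower (r : ℝ) (hr : 0 < r) (hr2 : r < 1 / 2) :
    ENNReal.ofReal (Stot.toReal / 8 * (r ^ 3 * Real.log (1 / r)))
      ≤ (volume.withDensity fun x => ENNReal.ofReal (wWeight x)) (ball (0 : E2) r) := by
  have hL : 0 < Real.log (1 / r) := log_one_div_pos hr (by linarith)
  rw [mu_eq r hr hr2]
  have h1 : ENNReal.ofReal ((r / 2) ^ 2 * Real.log (1 / r) * (r / 2))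
      ≤ ∫⁻ y in Ioo (0 : ℝ) r, ENNReal.ofReal (y ^ 2 * Real.log (1 / y)) := by
    calc ENNReal.ofReal ((r / 2) ^ 2 * Real.log (1 / r) * (r / 2))
        = ENNReal.ofReal ((r / 2) ^ 2 * Real.log (1 / r)) * volume (Ioo (r / 2) r) := by
          rw [Real.volume_Ioo, ENNReal.ofReal_mul (by positivity)]
          congr 2
          ring
      _ = ∫⁻ _ in Ioo (r / 2) r, ENNReal.ofReal ((r / 2) ^ 2 * Real.log (1 / r)) :=
          (setLIntegral_const _ _).symm
      _ ≤ ∫⁻ y in Ioo (r / 2) r, ENNReal.ofReal (y ^ 2 * Real.log (1 / y)) := by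
          refine setLIntegral_mono
            ((measurable_id.pow_const 2).mul
              (Real.measurable_log.comp (measurable_const.div measurable_id))).ennreal_ofReal
            fun y hy => ?_
          refine ENNReal.ofReal_le_ofReal ?_
          have hy1 : 0 < y := lt_trans (by positivity) hy.1
          have hLy : Real.log (1 / r) ≤ Real.log (1 / y) :=
            Real.log_le_log (by positivity) (one_div_le_one_div_of_le hy1 hy.2.le)
          have hsq : (r / 2) ^ 2 ≤ y ^ 2 := by nlinarith [hy.1]
          nlinarith
      _ ≤ ∫⁻ y in Ioo (0 : ℝ) r, ENNReal.ofReal (y ^ 2 * Real.log (1 / y)) :=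
          lintegral_mono_set (Ioo_subset_Ioo (by positivity) le_rfl)
  calc ENNReal.ofReal (Stot.toReal / 8 * (r ^ 3 * Real.log (1 / r)))
      = ENNReal.ofReal Stot.toReal * ENNReal.ofReal ((r / 2) ^ 2 * Real.log (1 / r) * (r / 2)) := by
        rw [← ENNReal.ofReal_mul Stot_toReal_pos.le]
        congr 1
        ring
    _ ≤ Stot * ∫⁻ y in Ioo (0 : ℝ) r, ENNReal.ofReal (y ^ 2 * Real.log (1 / y)) := by
        rw [← Stot_eq]; exact mul_le_mul_right h1 _

lemma sq_log_le {y ε : ℝ} (hy : 0 < y) (hε : 0 < ε) :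
    y ^ 2 * Real.log (1 / y) ≤ ε⁻¹ * y ^ ((2 : ℝ) - ε) := by
  have h1 : Real.log (1 / y) = ε⁻¹ * Real.log ((1 / y) ^ ε) := by
    rw [Real.log_rpow (by positivity)]
    field_simp
  have h2 : Real.log ((1 / y) ^ ε) ≤ (1 / y) ^ ε := by
    have := Real.log_le_sub_one_of_pos (x := (1 / y) ^ ε) (by positivity)
    linarith
  have h3 : (1 / y : ℝ) ^ ε = y ^ (-ε) := by
    rw [one_div, Real.inv_rpow hy.le, ← Real.rpow_neg hy.le]
  have h4 : y ^ 2 * y ^ (-ε) = y ^ ((2 : ℝ) - ε) := by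
    rw [show (y : ℝ) ^ 2 = y ^ ((2 : ℝ) : ℝ) by rw [Real.rpow_two],
      ← Real.rpow_add hy, ← sub_eq_add_neg]
  calc y ^ 2 * Real.log (1 / y) = ε⁻¹ * (y ^ 2 * Real.log ((1 / y) ^ ε)) := by
        rw [h1]; ring
    _ ≤ ε⁻¹ * (y ^ 2 * y ^ (-ε)) := by
        have : y ^ 2 * Real.log ((1 / y) ^ ε) ≤ y ^ 2 * y ^ (-ε) := by
          rw [← h3]
          exact mul_le_mul_of_nonneg_left h2 (by positivity)
        exact mul_le_mul_of_nonneg_left this (by positivity)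
    _ = ε⁻¹ * y ^ ((2 : ℝ) - ε) := by rw [h4]

lemma mu_upper (ε : ℝ) (hε : 0 < ε) (hε2 : ε < 1) (r : ℝ) (hr : 0 < r) (hr2 : r < 1 / 2) :
    (volume.withDensity fun x => ENNReal.ofReal (wWeight x)) (ball (0 : E2) r)
      ≤ ENNReal.ofReal (Stot.toReal * ε⁻¹ * r ^ ((3 : ℝ) - ε)) := by
  rw [mu_eq r hr hr2]
  have h1 : (∫⁻ y in Ioo (0 : ℝ) r, ENNReal.ofReal (y ^ 2 * Real.log (1 / y)))
      ≤ ENNReal.ofReal (ε⁻¹ * r ^ ((2 : ℝ) - ε) * r) := by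
    calc (∫⁻ y in Ioo (0 : ℝ) r, ENNReal.ofReal (y ^ 2 * Real.log (1 / y)))
        ≤ ∫⁻ _ in Ioo (0 : ℝ) r, ENNReal.ofReal (ε⁻¹ * r ^ ((2 : ℝ) - ε)) := by
          refine setLIntegral_mono measurable_const fun y hy => ?_
          refine ENNReal.ofReal_le_ofReal ?_
          have hy1 : 0 < y := hy.1
          have hle : y ^ ((2 : ℝ) - ε) ≤ r ^ ((2 : ℝ) - ε) :=
            Real.rpow_le_rpow hy1.le hy.2.le (by linarith)
          
          calc y ^ 2 * Real.log (1 / y) ≤ ε⁻¹ * y ^ ((2 : ℝ) - ε) := sq_log_le hy1 hε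
            _ ≤ ε⁻¹ * r ^ ((2 : ℝ) - ε) := mul_le_mul_of_nonneg_left hle (by positivity)
      _ = ENNReal.ofReal (ε⁻¹ * r ^ ((2 : ℝ) - ε)) * volume (Ioo (0:ℝ) r) := setLIntegral_const _ _
      _ = ENNReal.ofReal (ε⁻¹ * r ^ ((2 : ℝ) - ε) * r) := by
          rw [Real.volume_Ioo, sub_zero, ← ENNReal.ofReal_mul (by positivity)]
  calc Stot * ∫⁻ y in Ioo (0 : ℝ) r, ENNReal.ofReal (y ^ 2 * Real.log (1 / y))
      ≤ ENNReal.ofReal Stot.toReal * ENNReal.ofReal (ε⁻¹ * r ^ ((2 : ℝ) - ε) * r) := by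
        rw [← Stot_eq]; exact mul_le_mul_right h1 _
    _ = ENNReal.ofReal (Stot.toReal * ε⁻¹ * r ^ ((3 : ℝ) - ε)) := by
        rw [← ENNReal.ofReal_mul Stot_toReal_pos.le]
        congr 1
        rw [show ((3:ℝ) - ε) = ((2:ℝ) - ε) + 1 by ring, Real.rpow_add hr, Real.rpow_one]
        ring


/-- For `dν = (1/w) dx` on `ℝ²`, one has `ν(B(0,r)) ≍ r / log(1/r)` for small `r`; consequently,
for every `q > 2`, `r ν(B(0,r))^{1/q} / μ(B(0,r))^{1/2} → ∞` as `r → 0`, where `dμ = w dx`. -/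
theorem stmt11 :
    (∃ c C r₁ : ℝ, 0 < c ∧ 0 < C ∧ 0 < r₁ ∧ ∀ r : ℝ, 0 < r → r < r₁ →
      ENNReal.ofReal (c * r / Real.log (1 / r)) ≤
          (volume.withDensity fun x => ENNReal.ofReal (wWeight x)⁻¹)
            (ball (0 : EuclideanSpace ℝ (Fin 2)) r) ∧
        (volume.withDensity fun x => ENNReal.ofReal (wWeight x)⁻¹)
            (ball (0 : EuclideanSpace ℝ (Fin 2)) r) ≤
          ENNReal.ofReal (C * r / Real.log (1 / r))) ∧
    ∀ q : ℝ, 2 < q →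
      Tendsto (fun r : ℝ =>
          r * ((volume.withDensity fun x => ENNReal.ofReal (wWeight x)⁻¹)
                (ball (0 : EuclideanSpace ℝ (Fin 2)) r)).toReal ^ (1 / q) /
            ((volume.withDensity fun x => ENNReal.ofReal (wWeight x))
                (ball (0 : EuclideanSpace ℝ (Fin 2)) r)).toReal ^ (1 / 2 : ℝ))
        (𝓝[>] 0) atTop := by
  constructor
  · exact ⟨Stot.toReal / 4, Stot.toReal, 1 / 2, div_pos Stot_toReal_pos (by norm_num),
      Stot_toReal_pos, by norm_num,
      fun r hr hr2 => ⟨nu_lower r hr hr2, nu_upper r hr hr2⟩⟩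
  intro q hq
  have hq1 : (0 : ℝ) < q := by linarith
  have h1q : 1 / q < 1 / 2 := by
    rw [div_lt_div_iff₀ hq1 two_pos]; linarith
  have h1q0 : 0 < 1 / q := by positivity
  set c : ℝ := Stot.toReal / 4 with hc_def
  have hc : 0 < c := div_pos Stot_toReal_pos (by norm_num)
  set ε : ℝ := 1 / 2 - 1 / q with hε_def
  have hε : 0 < ε := by simp only [hε_def]; linarith
  have hε2 : ε < 1 := by simp only [hε_def]; linarith
  set δ : ℝ := ε / 2 with hδ_def
  have hδ : 0 < δ := by positivity
  set θ : ℝ := q * ε / 4 with hθ_def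
  have hθ : 0 < θ := by positivity
  set A : ℝ := Stot.toReal * ε⁻¹ with hA_def
  have hA : 0 < A := mul_pos Stot_toReal_pos (inv_pos.2 hε)
  set B : ℝ := (c * θ) ^ (1 / q) / A ^ ((1 : ℝ) / 2) with hB_def
  have hB : 0 < B := by positivity
  have hgoal : Tendsto (fun r : ℝ => B * (r⁻¹) ^ (δ / 2)) (𝓝[>] (0 : ℝ)) atTop :=
    ((tendsto_rpow_atTop (by positivity : 0 < δ / 2)).comp tendsto_inv_nhdsGT_zero).const_mul_atTop hB
  refine tendsto_atTop_mono' _ ?_ hgoal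
  filter_upwards [Ioo_mem_nhdsGT (by norm_num : (0:ℝ) < 1/4)] with r hrI
  obtain ⟨hr, hr4⟩ := hrI
  have hr2 : r < 1 / 2 := by linarith
  set L : ℝ := Real.log (1 / r) with hL_def
  have hL : 0 < L := log_one_div_pos hr (by linarith)
  set ν := (volume.withDensity fun x => ENNReal.ofReal (wWeight x)⁻¹)
      (ball (0 : EuclideanSpace ℝ (Fin 2)) r) with hν_def
  set μm := (volume.withDensity fun x => ENNReal.ofReal (wWeight x))
      (ball (0 : EuclideanSpace ℝ (Fin 2)) r) with hμ_def
  have hν_ne_top : ν ≠ ⊤ := (lt_of_le_of_lt (nu_upper r hr hr2) ENNReal.ofReal_lt_top).ne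
  have hμ_ne_top : μm ≠ ⊤ :=
    (lt_of_le_of_lt (mu_upper ε hε hε2 r hr hr2) ENNReal.ofReal_lt_top).ne
  have hνT : c * r / L ≤ ν.toReal := by
    have := ENNReal.toReal_mono hν_ne_top (nu_lower r hr hr2)
    rwa [ENNReal.toReal_ofReal (by positivity)] at this
  have hμT_le : μm.toReal ≤ A * r ^ ((3 : ℝ) - ε) := by
    have := ENNReal.toReal_mono ENNReal.ofReal_ne_top (mu_upper ε hε hε2 r hr hr2)
    rwa [ENNReal.toReal_ofReal (by positivity)] at this
  have hμT_pos : 0 < μm.toReal := by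
    have h := ENNReal.toReal_mono hμ_ne_top (mu_lower r hr hr2)
    rw [ENNReal.toReal_ofReal (by positivity)] at h
    have : (0:ℝ) < Stot.toReal / 8 * (r ^ 3 * L) :=
      mul_pos (div_pos Stot_toReal_pos (by norm_num)) (mul_pos (pow_pos hr 3) hL)
    linarith
  -- bound on L
  have hLle : L ≤ θ⁻¹ * (1 / r) ^ θ := by
    have h1 : L = θ⁻¹ * Real.log ((1 / r) ^ θ) := by
      rw [Real.log_rpow (by positivity)]
      field_simp
      exact hL_def
    have h2 : Real.log ((1 / r) ^ θ) ≤ (1 / r) ^ θ := by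
      have := Real.log_le_sub_one_of_pos (x := (1 / r) ^ θ) (by positivity)
      linarith
    rw [h1]
    exact mul_le_mul_of_nonneg_left h2 (by positivity)
  set X : ℝ := c * θ * r ^ ((1 : ℝ) + θ) with hX_def
  have hX_pos : 0 < X := by positivity
  have hX_le : X ≤ c * r / L := by
    have heq : c * r / (θ⁻¹ * (1 / r) ^ θ) = X := by
      rw [hX_def, Real.rpow_add hr, Real.rpow_one, one_div, Real.inv_rpow hr.le]
      have hrθ : (0:ℝ) < r ^ θ := Real.rpow_pos_of_pos hr θ
      field_simp
    rw [← heq]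
    exact div_le_div_of_nonneg_left (by positivity) hL hLle
  have hνX : X ≤ ν.toReal := le_trans hX_le hνT
  -- compare with the explicit lower bound function
  have key : B * (r⁻¹) ^ (δ / 2) ≤ r * ν.toReal ^ (1 / q) / μm.toReal ^ ((1:ℝ) / 2) := by
    have hnum : r * X ^ (1 / q) ≤ r * ν.toReal ^ (1 / q) :=
      mul_le_mul_of_nonneg_left (Real.rpow_le_rpow hX_pos.le hνX (by positivity)) hr.le
    have hden_pos : 0 < μm.toReal ^ ((1:ℝ) / 2) := Real.rpow_pos_of_pos hμT_pos _
    have hden : μm.toReal ^ ((1:ℝ) / 2) ≤ (A * r ^ ((3 : ℝ) - ε)) ^ ((1:ℝ) / 2) :=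
      Real.rpow_le_rpow ENNReal.toReal_nonneg hμT_le (by norm_num)
    have hmain : r * X ^ (1 / q) / (A * r ^ ((3 : ℝ) - ε)) ^ ((1:ℝ) / 2)
        ≤ r * ν.toReal ^ (1 / q) / μm.toReal ^ ((1:ℝ) / 2) :=
      div_le_div₀ (by positivity) hnum hden_pos hden
    refine le_trans (le_of_eq ?_) hmain
    -- algebraic identity
    have e1 : X ^ (1 / q) = (c * θ) ^ (1 / q) * r ^ (((1:ℝ) + θ) * (1 / q)) := by
      rw [hX_def, Real.mul_rpow (by positivity) (by positivity),
        ← Real.rpow_mul hr.le]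
    have e2 : (A * r ^ ((3 : ℝ) - ε)) ^ ((1:ℝ) / 2)
        = A ^ ((1:ℝ) / 2) * r ^ (((3:ℝ) - ε) * ((1:ℝ) / 2)) := by
      rw [Real.mul_rpow hA.le (by positivity), ← Real.rpow_mul hr.le]
    have hexp : (1 : ℝ) + ((1:ℝ) + θ) * (1 / q) - ((3:ℝ) - ε) * ((1:ℝ) / 2) = -(δ / 2) := by
      rw [hθ_def, hδ_def, hε_def]
      field_simp
      ring
    have e3 : (r⁻¹) ^ (δ / 2) = r ^ ((1 : ℝ) + ((1:ℝ) + θ) * (1 / q) - ((3:ℝ) - ε) * ((1:ℝ) / 2)) := by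
      rw [hexp, Real.rpow_neg hr.le, ← Real.inv_rpow hr.le]
    rw [e1, e2, e3, Real.rpow_sub hr, Real.rpow_add hr, Real.rpow_one, hB_def]
    have h1 : (0:ℝ) < A ^ ((1:ℝ)/2) := Real.rpow_pos_of_pos hA _
    have h2 : (0:ℝ) < r ^ (((3:ℝ) - ε) * ((1:ℝ) / 2)) := Real.rpow_pos_of_pos hr _
    field_simp
  exact key
end
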